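/- The complex roots of the polynomial p_n(X) - 2 are exactly the numbers of the form a + a⁻¹ where a is an n-th root of unity; equivalently, the roots are exactly the possible values of tr(ρ(x)) over representations ρ : ℤ/nℤ → SL(2,ℂ), where x is a generator. -/

import Mathlib

open Polynomial

noncomputable def tracePoly : ℕ → Polynomial ℂ
  | 0 => 1
  | 1 => X
  | 2 => X ^ 2 - 2
  | (n + 3) => X * tracePoly (n + 2) - tracePoly (n + 1)

lemma tracePoly_eval (a : ℂ) (ha : a ≠ 0) :
    ∀ n : ℕ, (tracePoly (n + 1)).eval (a + a⁻¹) = a ^ (n + 1) + a⁻¹ ^ (n + 1)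
  | 0 => by simp [tracePoly]
  | 1 => by
      simp only [tracePoly, eval_sub, eval_pow, eval_X, eval_ofNat]
      field_simp
      linear_combination (-(1 + a * a⁻¹)) * mul_inv_cancel₀ ha
  | (n + 2) => by
      have h1 := tracePoly_eval a ha n
      have h2 := tracePoly_eval a ha (n + 1)
      simp only [tracePoly, eval_sub, eval_mul, eval_X] at *
      rw [h1, h2]
      field_simp
      linear_combination (a⁻¹ ^ n * (a * a⁻¹ - a⁻¹ ^ 2)) * mul_inv_cancel₀ ha

theorem stmt11 (n : ℕ) (hn : 1 ≤ n) (z : ℂ) :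
    (tracePoly n).eval z - 2 = 0 ↔ ∃ a : ℂ, a ^ n = 1 ∧ z = a + a⁻¹ := by
  obtain ⟨m, rfl⟩ : ∃ m, n = m + 1 := ⟨n - 1, (Nat.succ_pred_eq_of_pos hn).symm⟩
  constructor
  · intro h
    obtain ⟨w, hw⟩ := IsAlgClosed.exists_pow_nat_eq (z ^ 2 - 4) (n := 2) (by norm_num)
    set a := (z + w) / 2 with ha
    have hprod : a * ((z - w) / 2) = 1 := by
      field_simp [ha]
      ring_nf
      rw [ha]; linear_combination (-1/2 : ℂ) * hw
    have ha0 : a ≠ 0 := left_ne_zero_of_mul_eq_one hprod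
    have hinv : a⁻¹ = (z - w) / 2 := inv_eq_of_mul_eq_one_right hprod
    have hz : z = a + a⁻¹ := by rw [hinv, ha]; ring
    rw [hz, tracePoly_eval a ha0, sub_eq_zero] at h
    refine ⟨a, ?_, hz⟩
    have han : a ^ (m + 1) ≠ 0 := pow_ne_zero _ ha0
    rw [inv_pow] at h
    have h2 : a ^ (m + 1) * (a ^ (m + 1) + (a ^ (m + 1))⁻¹) = a ^ (m + 1) * 2 := by rw [h]
    rw [mul_add, mul_inv_cancel₀ han] at h2
    have : (a ^ (m + 1) - 1) ^ 2 = 0 := by linear_combination h2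
    exact sub_eq_zero.mp (pow_eq_zero_iff (n := 2) (by norm_num) |>.mp this)
  · rintro ⟨a, han, rfl⟩
    have ha0 : a ≠ 0 := by
      intro h; rw [h] at han; simp at han
    rw [tracePoly_eval a ha0, inv_pow, han]
    norm_num
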